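/- Let d ≥ 1, T ≥ 1 and constants D∞ > 0, G∞ > 0, η₁ > 0, and set the constant learning rate η = η₁/√T. Let (f_t)_{t≥1} be convex differentiable functions ℝ^d → ℝ such that ‖∇f_t(ω)‖∞ ≤ G∞ for every ω with ‖ω‖∞ ≤ D∞/2. Let (ω_t)_{t≥1} be generated by online gradient descent, ω_{t+1} = ω_t − η ∇f_t(ω_t), and assume ‖ω_t‖∞ ≤ D∞/2 for all t. Then for every p ≥ 1 and every ω* ∈ ℝ^d with ‖ω*‖∞ ≤ D∞/2, Σ_{t=p}^{p+T} ( f_t(ω_t) − f_t(ω*) ) ≤ d·D∞²·√T/(2η₁) + (T+1)·d·G∞²·η₁/(2√T); in particular the regret with rolling window of size T is O(√T), uniformly in p. -/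

import Mathlib

open Finset InnerProductSpace


lemma grad_ineq {d : ℕ} (f : EuclideanSpace ℝ (Fin d) → ℝ)
    (hconv : ConvexOn ℝ Set.univ f)
    (x y gx : EuclideanSpace ℝ (Fin d)) (hg : HasGradientAt f gx x) :
    f x + inner ℝ gx (y - x) ≤ f y := by
  set φ : ℝ → ℝ := fun s => f (AffineMap.lineMap x y s) with hφ
  have hφc : ConvexOn ℝ Set.univ φ := by
    have := hconv.comp_affineMap (AffineMap.lineMap x y)
    rw [Set.preimage_univ] at this
    exact this
  have hline : ∀ s : ℝ, HasDerivAt (fun s : ℝ => AffineMap.lineMap x y s) (y - x) s := by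
    intro s
    have heq : (fun s : ℝ => AffineMap.lineMap x y s) = fun s : ℝ => x + s • (y - x) := by
      funext s
      simp [AffineMap.lineMap_apply_module]
      module
    rw [heq]
    simpa using ((hasDerivAt_id s).smul_const (y - x)).const_add x
  have hd : HasDerivAt φ (inner ℝ gx (y - x) : ℝ) 0 := by
    have hf : HasFDerivAt f (toDual ℝ _ gx) ((AffineMap.lineMap x y) (0:ℝ)) := by
      simp only [AffineMap.lineMap_apply_zero]; exact hg
    have := hf.comp_hasDerivAt (0 : ℝ) (hline 0)
    exact this
  have := hφc.le_slope_of_hasDerivAt (Set.mem_univ (0:ℝ)) (Set.mem_univ (1:ℝ)) one_pos hd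
  rw [slope_def_field] at this
  have h0 : φ 0 = f x := by simp [φ]
  have h1 : φ 1 = f y := by simp [φ]
  rw [h0, h1] at this
  rw [show (1:ℝ) - 0 = 1 by norm_num, div_one] at this
  linarith


/-- Online gradient descent with constant learning rate `η = η₁/√T`
achieves regret with rolling window of size `T` that is `O(√T)`, uniformly in the
position `p` of the window: for convex differentiable losses with `ℓ∞`-bounded
gradients and `ℓ∞`-bounded iterates,
`Σ_{t=p}^{p+T} (f_t(ω_t) − f_t(ω*)) ≤ d·D∞²·√T/(2η₁) + (T+1)·d·G∞²·η₁/(2√T)`. -/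
theorem ogd_rolling_window_regret
    (d T : ℕ) (hd : 1 ≤ d) (hT : 1 ≤ T)
    (Dinf Ginf η₁ : ℝ) (hD : 0 < Dinf) (hG : 0 < Ginf) (hη₁ : 0 < η₁)
    (η : ℝ) (hη : η = η₁ / Real.sqrt T)
    (f : ℕ → EuclideanSpace ℝ (Fin d) → ℝ)
    (g : ℕ → EuclideanSpace ℝ (Fin d) → EuclideanSpace ℝ (Fin d))
    (hconv : ∀ t, ConvexOn ℝ Set.univ (f t))
    (hgrad : ∀ t x, HasGradientAt (f t) (g t x) x)
    (hgradbound : ∀ t (x : EuclideanSpace ℝ (Fin d)),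
      (∀ i, |x i| ≤ Dinf / 2) → ∀ i, |g t x i| ≤ Ginf)
    (ω : ℕ → EuclideanSpace ℝ (Fin d))
    (hupdate : ∀ t, ω (t + 1) = ω t - η • g t (ω t))
    (hωbound : ∀ t i, |ω t i| ≤ Dinf / 2) :
    ∀ p : ℕ, 1 ≤ p → ∀ ωstar : EuclideanSpace ℝ (Fin d),
      (∀ i, |ωstar i| ≤ Dinf / 2) →
      ∑ t ∈ Finset.Icc p (p + T), (f t (ω t) - f t ωstar)
        ≤ (d : ℝ) * Dinf ^ 2 * Real.sqrt T / (2 * η₁)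
          + ((T : ℝ) + 1) * (d : ℝ) * Ginf ^ 2 * η₁ / (2 * Real.sqrt T) := by
  intro p hp ωstar hstar
  have hsT : 0 < Real.sqrt T := Real.sqrt_pos.mpr (by exact_mod_cast Nat.lt_of_lt_of_le Nat.zero_lt_one hT)
  have hηpos : 0 < η := by rw [hη]; positivity
  set a : ℕ → ℝ := fun t => ‖ω t - ωstar‖ ^ 2 with ha
  -- per-step bound
  have key : ∀ t, f t (ω t) - f t ωstar ≤ (a t - a (t+1)) / (2*η) + η/2 * ((d:ℝ) * Ginf^2) := by
    intro t
    have hgb : ∀ i, |g t (ω t) i| ≤ Ginf := hgradbound t (ω t) (hωbound t)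
    have hgn : ‖g t (ω t)‖ ^ 2 ≤ (d:ℝ) * Ginf ^ 2 := by
      rw [← real_inner_self_eq_norm_sq, PiLp.inner_apply]
      calc ∑ i, g t (ω t) i * g t (ω t) i ≤ ∑ _i : Fin d, Ginf ^ 2 := by
            apply Finset.sum_le_sum
            intro i _
            have := hgb i
            nlinarith [abs_nonneg (g t (ω t) i), neg_abs_le (g t (ω t) i), le_abs_self (g t (ω t) i)]
        _ = (d:ℝ) * Ginf ^ 2 := by simp [Finset.sum_const]; try ring
    have hconv' := grad_ineq (f t) (hconv t) (ω t) ωstar (g t (ω t)) (hgrad t (ω t))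
    have hinner : f t (ω t) - f t ωstar ≤ inner ℝ (g t (ω t)) (ω t - ωstar) := by
      have : (inner ℝ (g t (ω t)) (ωstar - ω t) : ℝ) = - inner ℝ (g t (ω t)) (ω t - ωstar) := by
        rw [← inner_neg_right]; congr 1; abel
      linarith [hconv', this.symm ▸ hconv']
    -- expansion of a (t+1)
    have hexp : a (t+1) = a t - 2*η*inner ℝ (g t (ω t)) (ω t - ωstar) + η^2 * ‖g t (ω t)‖^2 := by
      have h1 : ω (t+1) - ωstar = (ω t - ωstar) - η • g t (ω t) := by
        rw [hupdate t]; abel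
      rw [ha]
      simp only [h1]
      rw [norm_sub_sq_real, real_inner_smul_right, norm_smul,
        real_inner_comm (ω t - ωstar)]
      simp only [Real.norm_eq_abs, abs_of_pos hηpos]
      ring
    have : (inner ℝ (g t (ω t)) (ω t - ωstar) : ℝ) = (a t - a (t+1)) / (2*η) + η/2 * ‖g t (ω t)‖^2 := by
      field_simp [hexp]
      rw [hexp]; ring
    rw [this] at hinner
    have : η/2 * ‖g t (ω t)‖^2 ≤ η/2 * ((d:ℝ) * Ginf^2) := by
      apply mul_le_mul_of_nonneg_left hgn (by linarith)
    linarith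
  -- sum up
  have hsum : ∑ t ∈ Finset.Icc p (p + T), (f t (ω t) - f t ωstar)
      ≤ ∑ t ∈ Finset.Icc p (p + T), ((a t - a (t+1)) / (2*η) + η/2 * ((d:ℝ) * Ginf^2)) :=
    Finset.sum_le_sum (fun t _ => key t)
  have htel : ∑ t ∈ Finset.Icc p (p + T), (a t - a (t+1)) = a p - a (p + T + 1) := by
    rw [← Finset.Ico_add_one_right_eq_Icc, Finset.sum_Ico_eq_sum_range]
    have hn : p + T + 1 - p = T + 1 := by omega
    rw [hn]
    have := Finset.sum_range_sub' (fun i => a (p + i)) (T + 1)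
    simpa [Nat.add_assoc] using this
  have hcard : (Finset.Icc p (p + T)).card = T + 1 := by
    rw [Nat.card_Icc]; omega
  have hsplit : ∑ t ∈ Finset.Icc p (p + T), ((a t - a (t+1)) / (2*η) + η/2 * ((d:ℝ) * Ginf^2))
      = (a p - a (p + T + 1)) / (2*η) + ((T:ℝ)+1) * (η/2 * ((d:ℝ) * Ginf^2)) := by
    rw [Finset.sum_add_distrib, ← Finset.sum_div, htel, Finset.sum_const, hcard]
    push_cast
    ring
  -- bound a p
  have hap : a p ≤ (d:ℝ) * Dinf ^ 2 := by
    show ‖ω p - ωstar‖ ^ 2 ≤ (d:ℝ) * Dinf ^ 2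
    rw [← real_inner_self_eq_norm_sq, PiLp.inner_apply]
    calc ∑ i, ((ω p - ωstar) i) * ((ω p - ωstar) i) ≤ ∑ _i : Fin d, Dinf ^ 2 := by
          apply Finset.sum_le_sum
          intro i _
          have h1 := hωbound p i
          have h2 := hstar i
          have h3 : |(ω p - ωstar) i| ≤ Dinf := by
            have : (ω p - ωstar) i = ω p i - ωstar i := rfl
            rw [this]
            calc |ω p i - ωstar i| ≤ |ω p i| + |ωstar i| := abs_sub (ω p i) (ωstar i)
              _ ≤ Dinf := by linarith
          nlinarith [abs_nonneg ((ω p - ωstar) i), neg_abs_le ((ω p - ωstar) i), le_abs_self ((ω p - ωstar) i)]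
      _ = (d:ℝ) * Dinf ^ 2 := by simp [Finset.sum_const]; try ring
  have haq : 0 ≤ a (p + T + 1) := by positivity
  have hfinal : (a p - a (p + T + 1)) / (2*η) + ((T:ℝ)+1) * (η/2 * ((d:ℝ) * Ginf^2))
      ≤ (d : ℝ) * Dinf ^ 2 * Real.sqrt T / (2 * η₁)
          + ((T : ℝ) + 1) * (d : ℝ) * Ginf ^ 2 * η₁ / (2 * Real.sqrt T) := by
    have e1 : (d : ℝ) * Dinf ^ 2 * Real.sqrt T / (2 * η₁) = ((d:ℝ) * Dinf^2) / (2*η) := by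
      rw [hη]; field_simp; try ring
    have e2 : ((T : ℝ) + 1) * (d : ℝ) * Ginf ^ 2 * η₁ / (2 * Real.sqrt T)
        = ((T:ℝ)+1) * (η/2 * ((d:ℝ) * Ginf^2)) := by
      rw [hη]; field_simp; try ring
    rw [e1, e2]
    have : (a p - a (p + T + 1)) / (2*η) ≤ ((d:ℝ) * Dinf^2) / (2*η) := by
      apply div_le_div_of_nonneg_right _ (by linarith)
      linarith
    linarith
  calc ∑ t ∈ Finset.Icc p (p + T), (f t (ω t) - f t ωstar)
      ≤ (a p - a (p + T + 1)) / (2*η) + ((T:ℝ)+1) * (η/2 * ((d:ℝ) * Ginf^2)) := by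
        rw [← hsplit]; exact hsum
    _ ≤ _ := hfinal
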